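/- Let (X,T) be a topological dynamical system, d ∈ ℕ, and k ∈ ℕ with k ≥ 1. Then AP^[d](X,T) = AP^[d](X,T^k), i.e. a pair (x,y) is regionally proximal of order d along arithmetic progressions for T if and only if it is so for T^k. -/
import Mathlib

/-- The regionally proximal relation of order `d` along arithmetic progressions:
`(x, y) ∈ AP T d` iff for every `δ > 0` there are `x', y'` and `n : ℤ` with
`dist x x' < δ`, `dist y y' < δ` and `dist (T^{i n} x') (T^{i n} y') < δ` for `1 ≤ i ≤ d`. -/
def AP {X : Type*} [MetricSpace X] (T : Equiv.Perm X) (d : ℕ) : Set (X × X) :=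
  {p | ∀ δ : ℝ, 0 < δ → ∃ x' y' : X, ∃ n : ℤ,
    dist p.1 x' < δ ∧ dist p.2 y' < δ ∧
    ∀ i : ℕ, 1 ≤ i → i ≤ d →
      dist ((T ^ ((i : ℤ) * n)) x') ((T ^ ((i : ℤ) * n)) y') < δ}

/-- A uniform modulus of continuity for finitely many continuous self-maps of a
compact metric space. -/
lemma exists_uniform_eps {X : Type*} [MetricSpace X] [CompactSpace X]
    (f : ℕ → X → X) (hf : ∀ j, Continuous (f j)) (N : ℕ) (δ : ℝ) (hδ : 0 < δ) :
    ∃ ε : ℝ, 0 < ε ∧ ε ≤ δ ∧ ∀ j ≤ N, ∀ u v : X, dist u v < ε →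
      dist (f j u) (f j v) < δ := by
  induction N with
  | zero =>
      obtain ⟨ε, hε, hεp⟩ := Metric.uniformContinuous_iff.mp
        (CompactSpace.uniformContinuous_of_continuous (hf 0)) δ hδ
      refine ⟨min ε δ, lt_min hε hδ, min_le_right _ _, ?_⟩
      intro j hj u v huv
      interval_cases j
      exact hεp (lt_of_lt_of_le huv (min_le_left _ _))
  | succ n ih =>
      obtain ⟨ε, hε, hεδ, hεp⟩ := ih
      obtain ⟨ε', hε', hε'p⟩ := Metric.uniformContinuous_iff.mp
        (CompactSpace.uniformContinuous_of_continuous (hf (n + 1))) δ hδ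
      refine ⟨min ε ε', lt_min hε hε', le_trans (min_le_left _ _) hεδ, ?_⟩
      intro j hj u v huv
      rcases Nat.lt_succ_iff_lt_or_eq.mp (Nat.lt_succ_of_le hj) with h | h
      · exact hεp j (Nat.lt_succ_iff.mp h) u v (lt_of_lt_of_le huv (min_le_left _ _))
      · rw [h]
        exact hε'p (lt_of_lt_of_le huv (min_le_right _ _))

/-- Rewriting powers of `T ^ k` as powers of `T`. -/
lemma pow_zpow_eq {X : Type*} (T : Equiv.Perm X) (k : ℕ) (z : ℤ) :
    (T ^ k) ^ z = T ^ ((k : ℤ) * z) := by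
  rw [← zpow_natCast T k, ← zpow_mul]

/-- For a topological dynamical system `(X, T)` (compact metric space `X`,
homeomorphism `T`), `d ∈ ℕ` and `k ≥ 1`, one has `AP^[d](X, T) = AP^[d](X, T^k)`. -/
theorem ap_pow_eq {X : Type*} [MetricSpace X] [CompactSpace X]
    (T : Equiv.Perm X) (hT : Continuous T) (hT' : Continuous T.symm)
    (d k : ℕ) (hk : 1 ≤ k) :
    AP T d = AP (T ^ k) d := by
  have hk0 : (0 : ℤ) < (k : ℤ) := by exact_mod_cast hk
  -- continuity of iterates of `T.symm`
  have hsym : ∀ j : ℕ, Continuous ⇑(T.symm ^ j) := by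
    intro j
    induction j with
    | zero => simpa using continuous_id
    | succ n ihn =>
        have : (T.symm ^ (n + 1) : Equiv.Perm X) = T.symm ^ n * T.symm := by
          rw [pow_succ]
        rw [this]
        exact ihn.comp hT'
  ext ⟨x, y⟩
  simp only [AP, Set.mem_setOf_eq]
  constructor
  · intro h δ hδ
    obtain ⟨ε, hε, hεδ, hεp⟩ := exists_uniform_eps (fun j => ⇑(T.symm ^ j)) hsym
      (d * (k - 1)) δ hδ
    obtain ⟨x', y', n, h1, h2, h3⟩ := h ε hε
    refine ⟨x', y', n / (k : ℤ), lt_of_lt_of_le h1 hεδ, lt_of_lt_of_le h2 hεδ, ?_⟩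
    intro i hi1 hid
    set r : ℤ := n % (k : ℤ) with hr
    have hr0 : 0 ≤ r := Int.emod_nonneg n (by omega)
    have hrk : r < (k : ℤ) := Int.emod_lt_of_pos n hk0
    have hir0 : 0 ≤ (i : ℤ) * r := mul_nonneg (by positivity) hr0
    have key : ((T ^ k) ^ ((i : ℤ) * (n / (k : ℤ))))
        = T.symm ^ ((i : ℤ) * r).toNat * T ^ ((i : ℤ) * n) := by
      have hdiv : (k : ℤ) * (n / (k : ℤ)) = n - r := by
        have := Int.mul_ediv_add_emod n (k : ℤ)
        omega
      have h1 : (k : ℤ) * ((i : ℤ) * (n / (k : ℤ))) = (-((i : ℤ) * r)) + (i : ℤ) * n := by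
        have e : (k : ℤ) * ((i : ℤ) * (n / (k : ℤ))) = (i : ℤ) * ((k : ℤ) * (n / (k : ℤ))) := by
          ring
        rw [e, hdiv]; ring
      rw [pow_zpow_eq, h1, zpow_add]
      congr 1
      rw [zpow_neg, ← Int.toNat_of_nonneg hir0, zpow_natCast, ← inv_pow]
      rfl
    have hbound : ((i : ℤ) * r).toNat ≤ d * (k - 1) := by
      have h2 : (i : ℤ) * r ≤ (d : ℤ) * ((k : ℤ) - 1) :=
        mul_le_mul (by exact_mod_cast hid) (by omega) hr0 (by positivity)
      have hcast : ((d * (k - 1) : ℕ) : ℤ) = (d : ℤ) * ((k : ℤ) - 1) := by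
        rw [Nat.cast_mul, Nat.cast_sub hk, Nat.cast_one]
      exact Int.toNat_le.mpr (by rw [hcast]; exact h2)
    have := hεp (((i : ℤ) * r).toNat) hbound ((T ^ ((i : ℤ) * n)) x')
      ((T ^ ((i : ℤ) * n)) y') (h3 i hi1 hid)
    simpa [key, Equiv.Perm.mul_apply] using this
  · intro h δ hδ
    obtain ⟨x', y', m, h1, h2, h3⟩ := h δ hδ
    refine ⟨x', y', (k : ℤ) * m, h1, h2, ?_⟩
    intro i hi1 hid
    have key : T ^ ((i : ℤ) * ((k : ℤ) * m)) = (T ^ k) ^ ((i : ℤ) * m) := by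
      rw [pow_zpow_eq]; ring_nf
    rw [key]
    exact h3 i hi1 hid
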